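/- Let $\Psi$ be an Orlicz function and $u>\Psi^{-1}(1)$. Let $Z$ be a Poisson random variable with parameter $1/\Psi(u)$. Then there exists a constant $C$ depending only on $\Psi$ such that for all sufficiently large $s$ and $u$, $\mathbb{P}(Z\ge\lceil 2s\rceil)\ge \exp(-C(s\ln(1+s)+s\psi(u)))$, where $\psi=\log(1+\Psi)$. -/

import Mathlib

open MeasureTheory ProbabilityTheory NNReal

/-- An Orlicz function: convex, strictly increasing on `[0,∞)`, vanishing at `0`. -/
def IsOrlicz (Ψ : ℝ → ℝ) : Prop :=
  ConvexOn ℝ (Set.Ici 0) Ψ ∧ StrictMonoOn Ψ (Set.Ici 0) ∧ Ψ 0 = 0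

/-- The associated exponent `ψ` with `Ψ = e^ψ - 1`. -/
noncomputable def orliczExp (Ψ : ℝ → ℝ) (x : ℝ) : ℝ := Real.log (1 + Ψ x)

/-- The Orlicz (Luxemburg) norm of a Banach-space-valued random variable. -/
noncomputable def orliczNorm {Ω : Type*} [MeasurableSpace Ω] (μ : Measure Ω)
    (Ψ : ℝ → ℝ) {F : Type*} [NormedAddCommGroup F] (X : Ω → F) : ℝ :=
  sInf {a : ℝ | 0 < a ∧ ∫⁻ ω, ENNReal.ofReal (Ψ (‖X ω‖ / a)) ∂μ ≤ 1}

/-- `X` has finite Orlicz norm. -/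
def OrliczFinite {Ω : Type*} [MeasurableSpace Ω] (μ : Measure Ω)
    (Ψ : ℝ → ℝ) {F : Type*} [NormedAddCommGroup F] (X : Ω → F) : Prop :=
  ∃ a : ℝ, 0 < a ∧ ∫⁻ ω, ENNReal.ofReal (Ψ (‖X ω‖ / a)) ∂μ ≤ 1

/-- Condition (HJ): `ψ(su) ≤ K (s ln(1+s) + s ψ(u))` for all `s, u ≥ K`. -/
def HJCond (Ψ : ℝ → ℝ) : Prop :=
  ∃ K > (0:ℝ), ∀ s u : ℝ, K ≤ s → K ≤ u →
    orliczExp Ψ (s * u) ≤ K * (s * Real.log (1 + s) + s * orliczExp Ψ u)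

/-- A Rademacher (symmetric ±1) random variable. -/
def IsRademacher {Ω : Type*} [MeasurableSpace Ω] (μ : Measure Ω) (ε : Ω → ℝ) : Prop :=
  μ {ω | ε ω = 1} = 1/2 ∧ μ {ω | ε ω = -1} = 1/2

/-- Lower bound for Poisson tails: if `Z ~ Poisson(1/Ψ(u))` then for large `s, u`,
`P(Z ≥ ⌈2s⌉) ≥ exp(-C(s ln(1+s) + s ψ(u)))`. -/
-- real-number key inequality
lemma key_real (s Pu ψu : ℝ) (hs : 3 ≤ s) (hP : 1 < Pu)
    (hψ : Real.log Pu ≤ ψu) (hψ0 : Real.log 2 ≤ ψu) :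
    Real.exp (-(10 * (s * Real.log (1 + s) + s * ψu))) ≤
      Real.exp (-(1/Pu)) * (1/Pu) ^ (⌈2*s⌉₊) / Nat.factorial ⌈2*s⌉₊ := by
  set k : ℕ := ⌈2*s⌉₊ with hk
  have hs0 : (0:ℝ) < s := by linarith
  have hPu0 : (0:ℝ) < Pu := by linarith
  have hk1 : 1 ≤ k := by
    rw [hk]
    exact Nat.one_le_ceil_iff.mpr (by linarith)
  have hkr1 : (1:ℝ) ≤ (k:ℝ) := by exact_mod_cast hk1
  have hkub : (k:ℝ) ≤ 3 * s := by
    have := Nat.ceil_lt_add_one (show (0:ℝ) ≤ 2*s by linarith)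
    rw [← hk] at this
    linarith
  -- pieces
  have h1 : Real.exp (-(1:ℝ)) ≤ Real.exp (-(1/Pu)) := by
    apply Real.exp_le_exp.mpr
    have : 1/Pu ≤ 1 := by
      rw [div_le_one hPu0]; linarith
    linarith
  have h2 : (1/Pu) ^ k = Real.exp (-(k * Real.log Pu)) := by
    rw [← Real.exp_log (show (0:ℝ) < 1/Pu by positivity), ← Real.exp_nat_mul,
      Real.log_div one_ne_zero (ne_of_gt hPu0), Real.log_one]
    ring_nf
  have h3 : (Nat.factorial k : ℝ) ≤ Real.exp ((k:ℝ) * Real.log k) := by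
    have h4 : (Nat.factorial k : ℝ) ≤ ((k:ℝ)) ^ k := by
      exact_mod_cast Nat.cast_le.mpr (Nat.factorial_le_pow k)
    rw [Real.exp_nat_mul, Real.exp_log (show (0:ℝ) < (k:ℝ) by linarith)]
    exact h4
  have hfac_pos : (0:ℝ) < (Nat.factorial k : ℝ) := by positivity
  have hRHS : Real.exp (-(1:ℝ) - k * Real.log Pu - (k:ℝ) * Real.log k) ≤
      Real.exp (-(1/Pu)) * (1/Pu) ^ k / (Nat.factorial k : ℝ) := by
    have hinv : Real.exp (-((k:ℝ) * Real.log k)) ≤ (Nat.factorial k : ℝ)⁻¹ := by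
      rw [Real.exp_neg]
      exact inv_anti₀ hfac_pos h3
    rw [div_eq_mul_inv]
    calc Real.exp (-(1:ℝ) - k * Real.log Pu - (k:ℝ) * Real.log k)
        = Real.exp (-(1:ℝ)) * Real.exp (-((k:ℝ) * Real.log Pu)) *
            Real.exp (-((k:ℝ) * Real.log k)) := by
          rw [← Real.exp_add, ← Real.exp_add]; ring_nf
      _ ≤ Real.exp (-(1/Pu)) * (1/Pu) ^ k * (Nat.factorial k : ℝ)⁻¹ := by
          apply mul_le_mul _ hinv (Real.exp_nonneg _) (by positivity)
          exact mul_le_mul h1 h2.ge (Real.exp_nonneg _) (Real.exp_nonneg _)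
  refine le_trans ?_ hRHS
  apply Real.exp_le_exp.mpr
  -- arithmetic
  have hL1 : (1:ℝ) ≤ Real.log (1 + s) := by
    rw [Real.le_log_iff_exp_le (by linarith)]
    have := Real.exp_one_lt_d9
    linarith
  have hψpos : (0:ℝ) < ψu := lt_of_lt_of_le (Real.log_pos (by norm_num)) hψ0
  have hlogk : Real.log k ≤ 2 * Real.log (1 + s) := by
    calc Real.log k ≤ Real.log ((1+s)^2) := by
          apply Real.log_le_log (by linarith)
          nlinarith
      _ = 2 * Real.log (1+s) := by
          rw [Real.log_pow]; push_cast; ring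
  have hlogk0 : 0 ≤ Real.log k := Real.log_nonneg hkr1
  have hkψ : (k:ℝ) * Real.log Pu ≤ 3 * s * ψu := by
    have hlogP0 : 0 ≤ Real.log Pu := Real.log_nonneg (le_of_lt hP)
    nlinarith
  have hklogk : (k:ℝ) * Real.log k ≤ 6 * s * Real.log (1+s) := by
    nlinarith
  nlinarith [mul_nonneg hs0.le hψpos.le, mul_nonneg hs0.le (by linarith : (0:ℝ) ≤ Real.log (1+s))]

theorem stmt15 {Ψ : ℝ → ℝ} (hΨ : IsOrlicz Ψ) :
    ∃ C > (0:ℝ), ∃ s₀ u₀ : ℝ, ∀ s ≥ s₀, ∀ u ≥ u₀, 1 < Ψ u →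
      Real.exp (-(C * (s * Real.log (1 + s) + s * orliczExp Ψ u))) ≤
        ((poissonMeasure (Real.toNNReal (1 / Ψ u))) {n : ℕ | (⌈2 * s⌉₊ : ℕ) ≤ n}).toReal := by
  refine ⟨10, by norm_num, 3, 0, fun s hs u _ hΨu => ?_⟩
  set r : ℝ≥0 := Real.toNNReal (1 / Ψ u) with hr
  have hPu0 : (0:ℝ) < Ψ u := by linarith
  have hrcoe : (r : ℝ) = 1 / Ψ u := Real.coe_toNNReal _ (by positivity)
  set k : ℕ := ⌈2*s⌉₊ with hk
  have hmono : (poissonMeasure r) {k} ≤ (poissonMeasure r) {n : ℕ | k ≤ n} :=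
    measure_mono (by intro n hn; simp only [Set.mem_singleton_iff] at hn
                     simp [hn])
  have hsing : (poissonMeasure r) {k} = ENNReal.ofReal (poissonPMFReal r k) := by
    rw [poissonMeasure_singleton]
    rfl
  have hfin : (poissonMeasure r) {n : ℕ | k ≤ n} ≠ ⊤ := measure_ne_top _ _
  have htr : poissonPMFReal r k ≤ ((poissonMeasure r) {n : ℕ | k ≤ n}).toReal := by
    have h := ENNReal.toReal_mono hfin (hsing ▸ hmono)
    rwa [ENNReal.toReal_ofReal poissonPMFReal_nonneg] at h
  refine le_trans ?_ htr
  unfold poissonPMFReal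
  rw [hrcoe]
  have hψ1 : Real.log (Ψ u) ≤ orliczExp Ψ u := by
    rw [orliczExp]; exact Real.log_le_log hPu0 (by linarith)
  have hψ2 : Real.log 2 ≤ orliczExp Ψ u := by
    rw [orliczExp]; exact Real.log_le_log (by norm_num) (by linarith)
  exact key_real s (Ψ u) (orliczExp Ψ u) hs hΨu hψ1 hψ2
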